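/- If v₁ and v₂ are unit vectors with ⟨v₁, v₂⟩ = −√3/2 (angle 150°), then the multisets {v₁, ρ_{v₁}v₂, ρ_{v₁}ρ_{v₂}v₁, ρ_{v₁}ρ_{v₂}ρ_{v₁}v₂, ρ_{v₁}ρ_{v₂}ρ_{v₁}ρ_{v₂}v₁, ρ_{v₁}ρ_{v₂}ρ_{v₁}ρ_{v₂}ρ_{v₁}v₂} and {v₂, ρ_{v₂}v₁, ρ_{v₂}ρ_{v₁}v₂, ρ_{v₂}ρ_{v₁}ρ_{v₂}v₁, ρ_{v₂}ρ_{v₁}ρ_{v₂}ρ_{v₁}v₂, ρ_{v₂}ρ_{v₁}ρ_{v₂}ρ_{v₁}ρ_{v₂}v₁} are equal. -/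

import Mathlib

open RealInnerProductSpace

/-- Reflection in the hyperplane orthogonal to `v`:
`ρ_v(x) = x - 2(⟪v,x⟫/⟪v,v⟫) v`. -/
noncomputable def reflFun {V : Type*} [NormedAddCommGroup V] [InnerProductSpace ℝ V]
    (v x : V) : V :=
  x - ((2 * ⟪v, x⟫ / ⟪v, v⟫) • v)

private lemma refl_apply {V : Type*} [NormedAddCommGroup V] [InnerProductSpace ℝ V]
    (v x : V) (hv : ⟪v, v⟫ = (1 : ℝ)) :
    reflFun v x = x - (2 * ⟪v, x⟫) • v := by
  simp only [reflFun, hv, div_one]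

private lemma six_rev {α : Type*} (a b c d e f : α) :
    ({a, b, c, d, e, f} : Multiset α) = {f, e, d, c, b, a} :=
  Quot.sound (List.reverse_perm [a, b, c, d, e, f]).symm

/-- For unit vectors at angle `150°` (`⟪v₁,v₂⟫ = -√3/2`), the two multisets of six
vectors obtained by alternately applying the reflections `ρ_{v₁}` and `ρ_{v₂}` starting
from `v₁` resp. `v₂` agree. -/
theorem braid_relation_length_six
    {V : Type*} [NormedAddCommGroup V] [InnerProductSpace ℝ V]
    (v₁ v₂ : V) (h₁ : ‖v₁‖ = 1) (h₂ : ‖v₂‖ = 1)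
    (h : ⟪v₁, v₂⟫ = -(Real.sqrt 3 / 2)) :
    ({v₁, reflFun v₁ v₂, reflFun v₁ (reflFun v₂ v₁),
        reflFun v₁ (reflFun v₂ (reflFun v₁ v₂)),
        reflFun v₁ (reflFun v₂ (reflFun v₁ (reflFun v₂ v₁))),
        reflFun v₁ (reflFun v₂ (reflFun v₁ (reflFun v₂ (reflFun v₁ v₂))))} : Multiset V) =
      {v₂, reflFun v₂ v₁, reflFun v₂ (reflFun v₁ v₂),
        reflFun v₂ (reflFun v₁ (reflFun v₂ v₁)),
        reflFun v₂ (reflFun v₁ (reflFun v₂ (reflFun v₁ v₂))),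
        reflFun v₂ (reflFun v₁ (reflFun v₂ (reflFun v₁ (reflFun v₂ v₁))))} := by
  set s : ℝ := Real.sqrt 3 with hs
  have hss : s * s = 3 := Real.mul_self_sqrt (by norm_num)
  have h11 : ⟪v₁, v₁⟫ = (1 : ℝ) := by
    rw [real_inner_self_eq_norm_mul_norm, h₁]; norm_num
  have h22 : ⟪v₂, v₂⟫ = (1 : ℝ) := by
    rw [real_inner_self_eq_norm_mul_norm, h₂]; norm_num
  have h21 : ⟪v₂, v₁⟫ = -(s / 2) := by rw [real_inner_comm]; exact h
  -- reflections of general combinations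
  have r1 : ∀ a b : ℝ, reflFun v₁ (a • v₁ + b • v₂) = (s * b - a) • v₁ + b • v₂ := by
    intro a b
    rw [refl_apply _ _ h11, inner_add_right, inner_smul_right, inner_smul_right, h11, h]
    module
  have r2 : ∀ a b : ℝ, reflFun v₂ (a • v₁ + b • v₂) = a • v₁ + (s * a - b) • v₂ := by
    intro a b
    rw [refl_apply _ _ h22, inner_add_right, inner_smul_right, inner_smul_right, h22, h21]
    module
  have hv1 : v₁ = (1 : ℝ) • v₁ + (0 : ℝ) • v₂ := by module
  have hv2 : v₂ = (0 : ℝ) • v₁ + (1 : ℝ) • v₂ := by module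
  -- compute all the vectors
  have e1 : reflFun v₁ v₂ = s • v₁ + (1 : ℝ) • v₂ := by
    rw [hv2, r1]; module
  have e2 : reflFun v₂ v₁ = (1 : ℝ) • v₁ + s • v₂ := by
    rw [hv1, r2]; module
  have e3 : reflFun v₁ (reflFun v₂ v₁) = (2 : ℝ) • v₁ + s • v₂ := by
    rw [e2, r1, hss]; module
  have e4 : reflFun v₂ (reflFun v₁ v₂) = s • v₁ + (2 : ℝ) • v₂ := by
    rw [e1, r2, hss]; module
  have e5 : reflFun v₁ (s • v₁ + (2 : ℝ) • v₂) = s • v₁ + (2 : ℝ) • v₂ := by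
    rw [r1]; module
  have e6 : reflFun v₂ ((2 : ℝ) • v₁ + s • v₂) = (2 : ℝ) • v₁ + s • v₂ := by
    rw [r2]; module
  have e7 : reflFun v₁ ((2 : ℝ) • v₁ + s • v₂) = (1 : ℝ) • v₁ + s • v₂ := by
    rw [r1, hss]; module
  have e8 : reflFun v₂ (s • v₁ + (2 : ℝ) • v₂) = s • v₁ + (1 : ℝ) • v₂ := by
    rw [r2, hss]; module
  have e9 : reflFun v₁ (s • v₁ + (1 : ℝ) • v₂) = v₂ := by
    rw [r1]; rw [hv2]; module
  have e10 : reflFun v₂ ((1 : ℝ) • v₁ + s • v₂) = v₁ := by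
    rw [r2]; rw [hv1]; module
  -- Left list
  have L1 : reflFun v₁ v₂ = s • v₁ + (1 : ℝ) • v₂ := e1
  have L2 : reflFun v₁ (reflFun v₂ v₁) = (2 : ℝ) • v₁ + s • v₂ := e3
  have L3 : reflFun v₁ (reflFun v₂ (reflFun v₁ v₂)) = s • v₁ + (2 : ℝ) • v₂ := by
    rw [e4, e5]
  have L4 : reflFun v₁ (reflFun v₂ (reflFun v₁ (reflFun v₂ v₁))) = (1 : ℝ) • v₁ + s • v₂ := by
    rw [e3, e6, e7]
  have L5 : reflFun v₁ (reflFun v₂ (reflFun v₁ (reflFun v₂ (reflFun v₁ v₂)))) = v₂ := by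
    rw [e4, e5, e8, e9]
  -- Right list
  have R1 : reflFun v₂ v₁ = (1 : ℝ) • v₁ + s • v₂ := e2
  have R2 : reflFun v₂ (reflFun v₁ v₂) = s • v₁ + (2 : ℝ) • v₂ := e4
  have R3 : reflFun v₂ (reflFun v₁ (reflFun v₂ v₁)) = (2 : ℝ) • v₁ + s • v₂ := by
    rw [e3, e6]
  have R4 : reflFun v₂ (reflFun v₁ (reflFun v₂ (reflFun v₁ v₂))) = s • v₁ + (1 : ℝ) • v₂ := by
    rw [e4, e5, e8]
  have R5 : reflFun v₂ (reflFun v₁ (reflFun v₂ (reflFun v₁ (reflFun v₂ v₁)))) = v₁ := by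
    rw [e3, e6, e7, e10]
  rw [L5, R5, L4, R4, L3, R3, L2, R2, L1, R1]
  exact six_rev _ _ _ _ _ _
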